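/- Let q be a power of an odd prime and let b, c be nonzero elements of the finite field F_q such that b/c is NOT a square in F_q, and let d ∈ F_q be any nonsquare. Set γ = b³/c². Then the quadratic twist Y² = X³ + bd²X + cd³ of the curve Y² = X³ + bX + c is isomorphic over F_q to the Weierstrass curve Y² = X³ + γX + γ, i.e., there exists an admissible change of variables over F_q carrying the former to the latter. -/

import Mathlib

/-- Over a finite field `F` of odd characteristic `p`, if `b, c ∈ F` are nonzero,
`b / c` is not a square in `F`, and `d ∈ F` is any nonsquare, then the quadratic twist
`Y² = X³ + bd²X + cd³` of `Y² = X³ + bX + c` is isomorphic over `F` (via an admissible change of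
variables) to the Weierstrass curve `Y² = X³ + γX + γ` where `γ = b³ / c²`. -/
theorem twist_iso_of_div_nonsq {F : Type*} [Field F] [Fintype F]
    (p : ℕ) [Fact p.Prime] [CharP F p] (hp : p ≠ 2)
    (b c d : F) (hb : b ≠ 0) (hc : c ≠ 0)
    (hnsq : ¬ ∃ s : F, b / c = s ^ 2) (hd : ¬ ∃ s : F, d = s ^ 2) :
    ∃ C : WeierstrassCurve.VariableChange F,
      C • ({ a₁ := 0, a₂ := 0, a₃ := 0, a₄ := b * d ^ 2, a₆ := c * d ^ 3 } :
            WeierstrassCurve F) =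
        ({ a₁ := 0, a₂ := 0, a₃ := 0, a₄ := b ^ 3 / c ^ 2, a₆ := b ^ 3 / c ^ 2 } :
          WeierstrassCurve F) := by
  classical
  have hd0 : d ≠ 0 := by rintro rfl; exact hd ⟨0, by ring⟩
  have hbc : b / c ≠ 0 := div_ne_zero hb hc
  -- `c * d / b` is a square since it is the quotient of two nonsquares
  have h1 : quadraticChar F d = -1 :=
    quadraticChar_neg_one_iff_not_isSquare.mpr fun ⟨s, hs⟩ => hd ⟨s, by rw [hs, sq]⟩
  have h2 : quadraticChar F (b / c) = -1 :=
    quadraticChar_neg_one_iff_not_isSquare.mpr fun ⟨s, hs⟩ => hnsq ⟨s, by rw [hs, sq]⟩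
  have hsq : IsSquare (c * d / b) := by
    have hne : c * d / b ≠ 0 := div_ne_zero (mul_ne_zero hc hd0) hb
    rw [← quadraticChar_one_iff_isSquare hne]
    have hkey : d = (b / c) * (c * d / b) := by field_simp
    have := h1
    rw [hkey, map_mul, h2] at this
    linarith
  obtain ⟨u, hu⟩ := hsq
  have hu0 : u ≠ 0 := by
    rintro rfl
    rw [mul_zero] at hu
    exact (div_ne_zero (mul_ne_zero hc hd0) hb) hu
  refine ⟨⟨Units.mk0 u hu0, 0, 0, 0⟩, ?_⟩
  have hu2 : u ^ 2 = c * d / b := by rw [sq, ← hu]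
  have e : u ^ 2 * b = c * d := by
    rw [hu2]; field_simp
  ext <;> simp [WeierstrassCurve.variableChange_a₁, WeierstrassCurve.variableChange_a₂, WeierstrassCurve.variableChange_a₃, WeierstrassCurve.variableChange_a₄, WeierstrassCurve.variableChange_a₆, Units.smul_def] <;> field_simp
  · linear_combination (-(c * d + b * u ^ 2)) * e
  · linear_combination (-(b ^ 2 * u ^ 4 + b * u ^ 2 * c * d + c ^ 2 * d ^ 2)) * e
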